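/- Spectral formula for the Lyapunov energy of a state variable: if A is Hurwitz, x₀ ∈ ℂⁿ, z := V x₀, and k ∈ {1,…,n}, then ∫₀^∞ |(exp(At) x₀)_k|² dt = −∑_{i,j=1}^n conj(u_i^k z_i) · u_j^k z_j / (conj(λ_i) + λ_j), where (exp(At)x₀)_k denotes the k-th component; in particular the right-hand side is a nonnegative real number. -/

import Mathlib

open Matrix MeasureTheory BigOperators

lemma aux_integrableOn_cexp {μ : ℂ} (hμ : μ.re < 0) :
    IntegrableOn (fun t : ℝ => Complex.exp (μ * t)) (Set.Ioi (0 : ℝ)) := by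
  have hb : (0 : ℝ) < -μ.re := by linarith
  have hg : IntegrableOn (fun t : ℝ => Real.exp (μ.re * t)) (Set.Ioi (0 : ℝ)) := by
    have := exp_neg_integrableOn_Ioi 0 hb
    simpa using this
  refine Integrable.mono' hg ?_ ?_
  · exact (Complex.continuous_exp.comp (continuous_const.mul
      Complex.continuous_ofReal)).aestronglyMeasurable
  · filter_upwards with t
    rw [Complex.norm_exp]
    simp [Complex.mul_re]

lemma aux_integral_cexp {μ : ℂ} (hμ : μ.re < 0) :
    ∫ t in Set.Ioi (0 : ℝ), Complex.exp (μ * t) = -μ⁻¹ := by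
  have hμ0 : μ ≠ 0 := fun h => by simp [h] at hμ
  have hderiv : ∀ t ∈ Set.Ici (0 : ℝ),
      HasDerivAt (fun t : ℝ => μ⁻¹ * Complex.exp (μ * t)) (Complex.exp (μ * t)) t := by
    intro t _
    have h1 : HasDerivAt (fun t : ℝ => μ * (t : ℂ)) μ t := by
      simpa using (Complex.ofRealCLM.hasDerivAt (x := t)).const_mul μ
    have h2 := (h1.cexp).const_mul μ⁻¹
    refine h2.congr_deriv ?_
    rw [mul_comm (Complex.exp (μ * t)) μ, ← mul_assoc, inv_mul_cancel₀ hμ0, one_mul]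
  have htend : Filter.Tendsto (fun t : ℝ => μ⁻¹ * Complex.exp (μ * t))
      Filter.atTop (nhds 0) := by
    rw [tendsto_zero_iff_norm_tendsto_zero]
    have : (fun t : ℝ => ‖μ⁻¹ * Complex.exp (μ * t)‖)
        = fun t : ℝ => ‖μ⁻¹‖ * Real.exp (μ.re * t) := by
      funext t
      rw [norm_mul, Complex.norm_exp]
      simp [Complex.mul_re]
    rw [this]
    have h2 : Filter.Tendsto (fun t : ℝ => μ.re * t) Filter.atTop Filter.atBot :=
      Filter.Tendsto.const_mul_atTop_of_neg hμ Filter.tendsto_id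
    simpa using (Real.tendsto_exp_atBot.comp h2).const_mul ‖μ⁻¹‖
  have := integral_Ioi_of_hasDerivAt_of_tendsto' hderiv (aux_integrableOn_cexp hμ) htend
  rw [this]
  simp

/-- Spectral formula for the Lyapunov energy of a state variable: if `A` is Hurwitz,
`x₀ ∈ ℂⁿ`, `z := V x₀`, and `k` is a state index, then
`∫₀^∞ |(exp(At) x₀)_k|² dt = −∑_{i,j} conj(u_i^k z_i) u_j^k z_j / (conj(λ_i) + λ_j)`;
in particular the right-hand side is a nonnegative real number. -/
theorem lyapunov_energy_of_state_spectral_formula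
    (n : ℕ) (hn : 1 ≤ n)
    (A U V : Matrix (Fin n) (Fin n) ℂ) (lam : Fin n → ℂ)
    (hUV : U * V = 1) (hVU : V * U = 1)
    (hA : A = U * Matrix.diagonal lam * V)
    (hHur : ∀ i, (lam i).re < 0)
    (x₀ : Fin n → ℂ) (z : Fin n → ℂ) (hz : z = V.mulVec x₀) (k : Fin n) :
    ((∫ t in Set.Ioi (0 : ℝ),
        ‖(NormedSpace.exp ((t : ℂ) • A)).mulVec x₀ k‖ ^ 2 : ℝ) : ℂ) =
      -(∑ i, ∑ j,
          starRingEnd ℂ (U k i * z i) * (U k j * z j) / (starRingEnd ℂ (lam i) + lam j)) ∧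
    (-(∑ i, ∑ j,
          starRingEnd ℂ (U k i * z i) * (U k j * z j) /
            (starRingEnd ℂ (lam i) + lam j))).im = 0 ∧
    0 ≤ (-(∑ i, ∑ j,
          starRingEnd ℂ (U k i * z i) * (U k j * z j) /
            (starRingEnd ℂ (lam i) + lam j))).re := by
  have hUunit : IsUnit U := ⟨⟨U, V, hUV, hVU⟩, rfl⟩
  have hVinv : V = U⁻¹ := (Matrix.inv_eq_right_inv hUV).symm
  set c : Fin n → ℂ := fun i => U k i * z i with hc
  -- Step A: the solution formula
  have hw : ∀ t : ℝ, (NormedSpace.exp ((t : ℂ) • A)).mulVec x₀ k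
      = ∑ i, c i * Complex.exp (lam i * t) := by
    intro t
    have hd : Matrix.diagonal (fun i => lam i * (t : ℂ))
        = (t : ℂ) • Matrix.diagonal lam := by
      ext i j
      by_cases h : i = j <;> simp [Matrix.diagonal, h, mul_comm]
    have h1 : (t : ℂ) • A = U * Matrix.diagonal (fun i => lam i * (t : ℂ)) * U⁻¹ := by
      rw [hA, ← hVinv, hd, Matrix.mul_smul, Matrix.smul_mul]
    rw [h1, Matrix.exp_conj U _ hUunit, Matrix.exp_diagonal, ← hVinv]
    rw [← Matrix.mulVec_mulVec, ← Matrix.mulVec_mulVec, ← hz]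
    rw [Pi.exp_def]
    simp only [Matrix.mulVec, dotProduct, Matrix.diagonal_apply, ite_mul, zero_mul,
      Finset.sum_ite_eq, Finset.mem_univ, if_true]
    refine Finset.sum_congr rfl fun i _ => ?_
    rw [← Complex.exp_eq_exp_ℂ]
    ring
  -- pointwise formula for the squared modulus
  have hpt : Set.EqOn
      (fun t : ℝ => ((‖(NormedSpace.exp ((t : ℂ) • A)).mulVec x₀ k‖ ^ 2 : ℝ) : ℂ))
      (fun t : ℝ => ∑ i, ∑ j, (starRingEnd ℂ (c i) * c j)
        * Complex.exp ((starRingEnd ℂ (lam i) + lam j) * t)) (Set.Ioi 0) := by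
    intro t _
    simp only
    rw [hw t, ← Complex.normSq_eq_norm_sq, Complex.normSq_eq_conj_mul_self, map_sum,
      Finset.sum_mul_sum]
    refine Finset.sum_congr rfl fun i _ => Finset.sum_congr rfl fun j _ => ?_
    rw [_root_.map_mul, ← Complex.exp_conj,
      show (starRingEnd ℂ) (lam i * (t : ℂ)) = (starRingEnd ℂ) (lam i) * (t : ℂ) by
        rw [_root_.map_mul, Complex.conj_ofReal],
      add_mul, Complex.exp_add]
    ring
  have hre : ∀ i j : Fin n, (starRingEnd ℂ (lam i) + lam j).re < 0 := by
    intro i j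
    have h1 := hHur i
    have h2 := hHur j
    simp only [Complex.add_re, Complex.conj_re]
    linarith
  have hint : ∀ i j : Fin n, IntegrableOn
      (fun t : ℝ => (starRingEnd ℂ (c i) * c j)
        * Complex.exp ((starRingEnd ℂ (lam i) + lam j) * t)) (Set.Ioi (0 : ℝ)) :=
    fun i j => (aux_integrableOn_cexp (hre i j)).const_mul _
  have key : ((∫ t in Set.Ioi (0 : ℝ),
        ‖(NormedSpace.exp ((t : ℂ) • A)).mulVec x₀ k‖ ^ 2 : ℝ) : ℂ) =
      -(∑ i, ∑ j, starRingEnd ℂ (c i) * c j / (starRingEnd ℂ (lam i) + lam j)) := by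
    rw [show (((∫ t in Set.Ioi (0:ℝ),
          ‖(NormedSpace.exp ((t : ℂ) • A)).mulVec x₀ k‖ ^ 2 : ℝ)) : ℂ)
        = ∫ t in Set.Ioi (0:ℝ),
          ((‖(NormedSpace.exp ((t : ℂ) • A)).mulVec x₀ k‖ ^ 2 : ℝ) : ℂ)
        from integral_ofReal.symm]
    rw [setIntegral_congr_fun measurableSet_Ioi hpt]
    rw [integral_finset_sum _ (fun i _ => integrable_finset_sum _ (fun j _ => hint i j))]
    have : ∀ i : Fin n, (∫ t in Set.Ioi (0 : ℝ), ∑ j, (starRingEnd ℂ (c i) * c j)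
        * Complex.exp ((starRingEnd ℂ (lam i) + lam j) * t))
        = ∑ j, -(starRingEnd ℂ (c i) * c j / (starRingEnd ℂ (lam i) + lam j)) := by
      intro i
      rw [integral_finset_sum _ (fun j _ => hint i j)]
      refine Finset.sum_congr rfl fun j _ => ?_
      rw [MeasureTheory.integral_const_mul, aux_integral_cexp (hre i j)]
      rw [div_eq_mul_inv]
      ring
    simp only [this, Finset.sum_neg_distrib]
  refine ⟨key, ?_, ?_⟩
  · rw [← key]
    simp
  · rw [← key, Complex.ofReal_re]
    exact integral_nonneg fun t => sq_nonneg _
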